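/- For the KNN valuation function u with parameter k, and any j with 3 ≤ j ≤ n, the Shapley–Taylor interaction indices satisfy the recursion: φ_{j-2,j-1}(u) = φ_{j-1,j}(u) + [2(j-k-1)/((j-2)(j-1))]·(u(j) - u(j-1)) if j > k+1, and φ_{j-2,j-1}(u) = φ_{j-1,j}(u) if j ≤ k+1. -/

import Mathlib

open Finset

/-- KNN valuation function: fraction (out of k) of label matches among the
min(k,|S|) smallest-index (closest) elements of S. `m i` says whether train
point i's label matches the test label. -/
noncomputable def knnVal (k : ℕ) (m : ℕ → Bool) (S : Finset ℕ) : ℝ :=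
  (((S.sort (· ≤ ·)).take k).countP m : ℝ) / k

/-- Discrete second difference of a set function. -/
noncomputable def secondDiff (u : Finset ℕ → ℝ) (S : Finset ℕ) (i j : ℕ) : ℝ :=
  u (S ∪ {i, j}) - u (S ∪ {i}) - u (S ∪ {j}) + u S

/-- Shapley–Taylor pair-interaction index on N = {1,…,n}. -/
noncomputable def sti (n : ℕ) (u : Finset ℕ → ℝ) (i j : ℕ) : ℝ :=
  (2 / n) * ∑ S ∈ ((Finset.Icc 1 n) \ {i, j}).powerset,
    (1 / ((n - 1).choose S.card) : ℝ) * secondDiff u S i j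


def gcnt (m : ℕ → Bool) (T : Finset ℕ) (p : ℕ) : ℕ := ((T.sort (· ≤ ·)).take p).countP m

lemma sort_union_of_lt (L H : Finset ℕ) (h : ∀ x ∈ L, ∀ y ∈ H, x < y) :
    (L ∪ H).sort (· ≤ ·) = L.sort (· ≤ ·) ++ H.sort (· ≤ ·) := by
  have hdisj : Disjoint L H := by
    rw [Finset.disjoint_left]
    intro a haL haH
    exact absurd rfl (h a haL a haH).ne
  apply (fun h1 h2 h3 => List.Perm.eq_of_pairwise' (r := ((· ≤ ·) : ℕ → ℕ → Prop)) h2 h3 h1)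
  · apply List.perm_of_nodup_nodup_toFinset_eq (Finset.sort_nodup _ _)
    · rw [List.nodup_append]
      refine ⟨Finset.sort_nodup _ _, Finset.sort_nodup _ _, ?_⟩
      intro a haL b haH
      rw [Finset.mem_sort] at haL haH
      exact (h a haL b haH).ne
    · rw [List.toFinset_append, Finset.sort_toFinset, Finset.sort_toFinset,
        Finset.sort_toFinset]
  · exact Finset.pairwise_sort _ _
  · rw [List.pairwise_append]
    refine ⟨Finset.pairwise_sort _ _, Finset.pairwise_sort _ _, ?_⟩
    intro a ha b hb
    rw [Finset.mem_sort] at ha hb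
    exact (h a ha b hb).le

lemma gcnt_union (m : ℕ → Bool) (L H : Finset ℕ) (p : ℕ)
    (h : ∀ x ∈ L, ∀ y ∈ H, x < y) :
    gcnt m (L ∪ H) p = gcnt m L p + gcnt m H (p - L.card) := by
  unfold gcnt
  rw [sort_union_of_lt L H h, List.take_append, List.countP_append,
    Finset.length_sort]

lemma gcnt_singleton (m : ℕ → Bool) (x p : ℕ) :
    gcnt m {x} p = if p = 0 then 0 else (if m x then 1 else 0) := by
  unfold gcnt
  rw [Finset.sort_singleton]
  cases p with
  | zero => simp
  | succ q => simp [List.countP_cons, List.countP_nil]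

lemma gcnt_zero (m : ℕ → Bool) (T : Finset ℕ) : gcnt m T 0 = 0 := by simp [gcnt]

lemma gcnt_L1H (m : ℕ → Bool) (L H : Finset ℕ) (x p : ℕ)
    (hL : ∀ l ∈ L, l < x) (hH : ∀ h ∈ H, x < h) :
    gcnt m (L ∪ ({x} ∪ H)) p =
      gcnt m L p + gcnt m {x} (p - L.card) + gcnt m H (p - L.card - 1) := by
  rw [gcnt_union m L ({x} ∪ H) p, gcnt_union m {x} H]
  · simp [add_assoc]
  · simpa using hH
  · intro l hl y hy
    rcases Finset.mem_union.1 hy with hy | hy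
    · simp at hy; subst hy; exact hL l hl
    · exact (hL l hl).trans (hH y hy)

lemma gcnt_L2H (m : ℕ → Bool) (L H : Finset ℕ) (x y p : ℕ)
    (hL : ∀ l ∈ L, l < x) (hxy : x < y) (hH : ∀ h ∈ H, y < h) :
    gcnt m (L ∪ ({x} ∪ ({y} ∪ H))) p =
      gcnt m L p + gcnt m {x} (p - L.card) + gcnt m {y} (p - L.card - 1) +
        gcnt m H (p - L.card - 2) := by
  rw [gcnt_union m L ({x} ∪ ({y} ∪ H)) p, gcnt_L1H m {x} H y (p - L.card)]
  · simp [add_assoc, Nat.sub_sub]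
  · simpa using hxy
  · exact hH
  · intro l hl z hz
    rcases Finset.mem_union.1 hz with hz | hz
    · simp at hz; subst hz; exact hL l hl
    · rcases Finset.mem_union.1 hz with hz | hz
      · simp at hz; subst hz; exact (hL l hl).trans hxy
      · exact ((hL l hl).trans hxy).trans (hH z hz)

lemma gcnt_L3H (m : ℕ → Bool) (L H : Finset ℕ) (x y z p : ℕ)
    (hL : ∀ l ∈ L, l < x) (hxy : x < y) (hyz : y < z) (hH : ∀ h ∈ H, z < h) :
    gcnt m (L ∪ ({x} ∪ ({y} ∪ ({z} ∪ H)))) p =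
      gcnt m L p + gcnt m {x} (p - L.card) + gcnt m {y} (p - L.card - 1) +
        gcnt m {z} (p - L.card - 2) + gcnt m H (p - L.card - 3) := by
  rw [gcnt_union m L ({x} ∪ ({y} ∪ ({z} ∪ H))) p, gcnt_L2H m {x} H y z (p - L.card)]
  · simp [add_assoc, Nat.sub_sub]
  · simpa using hxy
  · exact hyz
  · exact hH
  · intro l hl w hw
    have hlx := hL l hl
    simp only [Finset.mem_union, Finset.mem_singleton] at hw
    rcases hw with rfl | rfl | rfl | hw
    · exact hlx
    · omega
    · omega
    · exact hlx.trans (hxy.trans (hyz.trans (hH w hw)))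

/-- the swap bijection -/
def swapCA (a c : ℕ) (S : Finset ℕ) : Finset ℕ :=
  if c ∈ S then insert a (S.erase c) else S

lemma chi_diff (k t : ℕ) (bb cc : Bool) (hk : 1 ≤ k) :
    ((if k - t - 1 = 0 then 0 else if bb then (1:ℝ) else 0)
        - (if k - t = 0 then 0 else if bb then (1:ℝ) else 0))
      + ((if k - t = 0 then 0 else if cc then (1:ℝ) else 0)
        - (if k - t - 1 = 0 then 0 else if cc then (1:ℝ) else 0))
    = if t = k - 1 then ((if cc then (1:ℝ) else 0) - (if bb then (1:ℝ) else 0)) else 0 := by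
  split_ifs <;> first | ring1 | (exfalso; omega)

set_option maxHeartbeats 2000000 in
lemma point (n k j : ℕ) (m : ℕ → Bool) (hk : 1 ≤ k) (hj3 : 3 ≤ j) (hjn : j ≤ n)
    (S : Finset ℕ) (hS : S ⊆ Finset.Icc 1 n \ {j-2, j-1}) :
    secondDiff (knnVal k m) S (j-2) (j-1)
      - secondDiff (knnVal k m) (swapCA (j-2) j S) (j-1) j
    = if (S.filter (· < j-2)).card = k-1
        then ((if m j then (1:ℝ) else 0) - (if m (j-1) then (1:ℝ) else 0))/k else 0 := by
  have hu : ∀ T, knnVal k m T = (gcnt m T k : ℝ)/k := fun _ => rfl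
  have hab : j - 2 < j - 1 := by omega
  have hbc : j - 1 < j := by omega
  by_cases hc : j ∈ S
  · obtain ⟨L, H, hdec, hLlt, hHlt⟩ :
        ∃ L H : Finset ℕ, S = L ∪ ({j} ∪ H) ∧ (∀ x ∈ L, x < j-2) ∧ (∀ x ∈ H, j < x) := by
      refine ⟨S.filter (· < j-2), S.filter (j < ·), ?_, ?_, ?_⟩
      · ext x
        simp only [Finset.mem_union, Finset.mem_filter, Finset.mem_singleton]
        constructor
        · intro hx
          have hx' := hS hx
          simp only [Finset.mem_sdiff, Finset.mem_Icc, Finset.mem_insert,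
            Finset.mem_singleton] at hx'
          rcases Nat.lt_trichotomy x j with h | h | h
          · left; exact ⟨hx, by omega⟩
          · right; left; exact h
          · right; right; exact ⟨hx, h⟩
        · rintro (⟨h, _⟩ | rfl | ⟨h, _⟩) <;> [exact h; exact hc; exact h]
      · intro x hx; exact (Finset.mem_filter.1 hx).2
      · intro x hx; exact (Finset.mem_filter.1 hx).2
    subst hdec
    have hLb : ∀ l ∈ L, l < j - 1 := fun l hl => (hLlt l hl).trans hab
    have hLc : ∀ l ∈ L, l < j := fun l hl => (hLlt l hl).trans (hab.trans hbc)
    have hHa : ∀ h ∈ H, j - 2 < h := fun h hh => (hab.trans hbc).trans (hHlt h hh)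
    have hHb : ∀ h ∈ H, j - 1 < h := fun h hh => hbc.trans (hHlt h hh)
    have hfilt : ((L ∪ ({j} ∪ H)).filter (· < j - 2)).card = L.card := by
      rw [Finset.filter_union, Finset.filter_union,
        Finset.filter_true_of_mem hLlt,
        Finset.filter_false_of_mem (by simp),
        Finset.filter_false_of_mem (fun x hx => by have := hHlt x hx; omega)]
      simp
    have hswap : swapCA (j-2) j (L ∪ ({j} ∪ H)) = L ∪ ({j-2} ∪ H) := by
      unfold swapCA
      rw [if_pos hc]
      have hjL : j ∉ L := fun h => by have := hLlt j h; omega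
      have hjH : j ∉ H := fun h => by have := hHlt j h; omega
      rw [Finset.erase_union_distrib, Finset.erase_union_distrib,
        Finset.erase_eq_of_notMem hjL, Finset.erase_eq_of_notMem hjH,
        Finset.erase_singleton]
      ext x
      simp only [Finset.mem_insert, Finset.mem_union, Finset.mem_singleton,
        Finset.notMem_empty]
      tauto
    have hA1 : (L ∪ ({j} ∪ H)) ∪ {j-2, j-1} = L ∪ ({j-2} ∪ ({j-1} ∪ ({j} ∪ H))) := by
      ext x; simp only [Finset.mem_union, Finset.mem_insert, Finset.mem_singleton]; tauto
    have hA2 : (L ∪ ({j} ∪ H)) ∪ {j-2} = L ∪ ({j-2} ∪ ({j} ∪ H)) := by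
      ext x; simp only [Finset.mem_union, Finset.mem_insert, Finset.mem_singleton]; tauto
    have hA3 : (L ∪ ({j} ∪ H)) ∪ {j-1} = L ∪ ({j-1} ∪ ({j} ∪ H)) := by
      ext x; simp only [Finset.mem_union, Finset.mem_insert, Finset.mem_singleton]; tauto
    have hB1 : (L ∪ ({j-2} ∪ H)) ∪ {j-1, j} = L ∪ ({j-2} ∪ ({j-1} ∪ ({j} ∪ H))) := by
      ext x; simp only [Finset.mem_union, Finset.mem_insert, Finset.mem_singleton]; tauto
    have hB2 : (L ∪ ({j-2} ∪ H)) ∪ {j-1} = L ∪ ({j-2} ∪ ({j-1} ∪ H)) := by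
      ext x; simp only [Finset.mem_union, Finset.mem_insert, Finset.mem_singleton]; tauto
    have hB3 : (L ∪ ({j-2} ∪ H)) ∪ {j} = L ∪ ({j-2} ∪ ({j} ∪ H)) := by
      ext x; simp only [Finset.mem_union, Finset.mem_insert, Finset.mem_singleton]; tauto
    rw [hswap, hfilt]
    unfold secondDiff
    rw [hA1, hA2, hA3, hB1, hB2, hB3]
    simp only [hu]
    rw [gcnt_L3H m L H (j-2) (j-1) j k hLlt hab hbc hHlt,
      gcnt_L2H m L H (j-2) j k hLlt (hab.trans hbc) hHlt,
      gcnt_L2H m L H (j-1) j k hLb hbc hHlt,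
      gcnt_L1H m L H j k hLc hHlt,
      gcnt_L2H m L H (j-2) (j-1) k hLlt hab hHb,
      gcnt_L1H m L H (j-2) k hLlt hHa]
    simp only [gcnt_singleton]
    push_cast
    rw [show (if L.card = k-1
        then ((if m j then (1:ℝ) else 0) - (if m (j-1) then (1:ℝ) else 0))/k else 0)
      = (if L.card = k-1
        then ((if m j then (1:ℝ) else 0) - (if m (j-1) then (1:ℝ) else 0)) else 0)/k by
        split_ifs <;> simp]
    have hk0 : (k:ℝ) ≠ 0 := Nat.cast_ne_zero.2 (by omega)
    field_simp
    split_ifs <;> first | ring1 | (exfalso; omega)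
  · obtain ⟨L, H, hdec, hLlt, hHlt⟩ :
        ∃ L H : Finset ℕ, S = L ∪ H ∧ (∀ x ∈ L, x < j-2) ∧ (∀ x ∈ H, j < x) := by
      refine ⟨S.filter (· < j-2), S.filter (j < ·), ?_, ?_, ?_⟩
      · ext x
        simp only [Finset.mem_union, Finset.mem_filter]
        constructor
        · intro hx
          have hx' := hS hx
          simp only [Finset.mem_sdiff, Finset.mem_Icc, Finset.mem_insert,
            Finset.mem_singleton] at hx'
          rcases Nat.lt_trichotomy x j with h | h | h
          · left; exact ⟨hx, by omega⟩
          · exact absurd (h ▸ hx) hc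
          · right; exact ⟨hx, h⟩
        · rintro (⟨h, _⟩ | ⟨h, _⟩) <;> exact h
      · intro x hx; exact (Finset.mem_filter.1 hx).2
      · intro x hx; exact (Finset.mem_filter.1 hx).2
    subst hdec
    have hLb : ∀ l ∈ L, l < j - 1 := fun l hl => (hLlt l hl).trans hab
    have hLc : ∀ l ∈ L, l < j := fun l hl => (hLlt l hl).trans (hab.trans hbc)
    have hHa : ∀ h ∈ H, j - 2 < h := fun h hh => (hab.trans hbc).trans (hHlt h hh)
    have hHb : ∀ h ∈ H, j - 1 < h := fun h hh => hbc.trans (hHlt h hh)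
    have hLH : ∀ l ∈ L, ∀ h ∈ H, l < h := fun l hl h hh => (hLc l hl).trans (hHlt h hh)
    have hfilt : ((L ∪ H).filter (· < j - 2)).card = L.card := by
      rw [Finset.filter_union, Finset.filter_true_of_mem hLlt,
        Finset.filter_false_of_mem (fun x hx => by have := hHlt x hx; omega)]
      simp
    have hswap : swapCA (j-2) j (L ∪ H) = L ∪ H := by
      unfold swapCA
      rw [if_neg hc]
    have hA1 : (L ∪ H) ∪ {j-2, j-1} = L ∪ ({j-2} ∪ ({j-1} ∪ H)) := by
      ext x; simp only [Finset.mem_union, Finset.mem_insert, Finset.mem_singleton]; tauto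
    have hA2 : (L ∪ H) ∪ {j-2} = L ∪ ({j-2} ∪ H) := by
      ext x; simp only [Finset.mem_union, Finset.mem_insert, Finset.mem_singleton]; tauto
    have hA3 : (L ∪ H) ∪ {j-1} = L ∪ ({j-1} ∪ H) := by
      ext x; simp only [Finset.mem_union, Finset.mem_insert, Finset.mem_singleton]; tauto
    have hB1 : (L ∪ H) ∪ {j-1, j} = L ∪ ({j-1} ∪ ({j} ∪ H)) := by
      ext x; simp only [Finset.mem_union, Finset.mem_insert, Finset.mem_singleton]; tauto
    have hB3 : (L ∪ H) ∪ {j} = L ∪ ({j} ∪ H) := by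
      ext x; simp only [Finset.mem_union, Finset.mem_insert, Finset.mem_singleton]; tauto
    rw [hswap, hfilt]
    unfold secondDiff
    rw [hA1, hA2, hA3, hB1, hB3]
    simp only [hu]
    rw [gcnt_L2H m L H (j-2) (j-1) k hLlt hab hHb,
      gcnt_L2H m L H (j-1) j k hLb hbc hHlt,
      gcnt_L1H m L H (j-2) k hLlt hHa,
      gcnt_L1H m L H (j-1) k hLb hHb,
      gcnt_L1H m L H j k hLc hHlt,
      gcnt_union m L H k hLH]
    simp only [gcnt_singleton]
    push_cast
    rw [show (if L.card = k-1
        then ((if m j then (1:ℝ) else 0) - (if m (j-1) then (1:ℝ) else 0))/k else 0)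
      = (if L.card = k-1
        then ((if m j then (1:ℝ) else 0) - (if m (j-1) then (1:ℝ) else 0)) else 0)/k by
        split_ifs <;> simp]
    have hk0 : (k:ℝ) ≠ 0 := Nat.cast_ne_zero.2 (by omega)
    field_simp
    split_ifs <;> first | ring1 | (exfalso; omega)

lemma swapCA_card (a c : ℕ) (S : Finset ℕ) (ha : a ∉ S) :
    (swapCA a c S).card = S.card := by
  unfold swapCA
  split_ifs with hc
  · rw [Finset.card_insert_of_notMem (fun h => ha (Finset.mem_of_mem_erase h)),
      Finset.card_erase_of_mem hc]
    have := Finset.card_pos.2 ⟨c, hc⟩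
    omega
  · rfl

lemma swapCA_swapCA (a c : ℕ) (S : Finset ℕ) (ha : a ∉ S) (hac : a ≠ c) :
    swapCA c a (swapCA a c S) = S := by
  by_cases hc : c ∈ S
  · unfold swapCA
    rw [if_pos hc, if_pos (Finset.mem_insert_self a _),
      Finset.erase_insert (fun h => ha (Finset.mem_of_mem_erase h)),
      Finset.insert_erase hc]
  · unfold swapCA
    rw [if_neg hc, if_neg ha]

lemma sum_swap (n j : ℕ) (hj3 : 3 ≤ j) (hjn : j ≤ n) (F : ℕ → Finset ℕ → ℝ) :
    ∑ S ∈ ((Finset.Icc 1 n) \ {j-1, j}).powerset, F S.card S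
      = ∑ S ∈ ((Finset.Icc 1 n) \ {j-2, j-1}).powerset, F S.card (swapCA (j-2) j S) := by
  have hmem : ∀ S ∈ ((Finset.Icc 1 n) \ {j-1, j}).powerset, j ∉ S := by
    intro S hS hj
    have := (Finset.mem_powerset.1 hS) hj
    simp [Finset.mem_sdiff] at this
  have hmem' : ∀ S ∈ ((Finset.Icc 1 n) \ {j-2, j-1}).powerset, j - 2 ∉ S := by
    intro S hS hj
    have := (Finset.mem_powerset.1 hS) hj
    simp [Finset.mem_sdiff] at this
  refine Finset.sum_nbij' (fun S => swapCA j (j-2) S) (fun S => swapCA (j-2) j S)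
    ?_ ?_ ?_ ?_ ?_
  · intro S hS
    have hsub := Finset.mem_powerset.1 hS
    rw [Finset.mem_powerset]
    simp only [swapCA]
    split_ifs with hc
    · intro x hx
      rcases Finset.mem_insert.1 hx with rfl | hx
      · simp only [Finset.mem_sdiff, Finset.mem_Icc, Finset.mem_insert,
          Finset.mem_singleton]
        omega
      · have hxe := Finset.mem_erase.1 hx
        have := hsub hxe.2
        simp only [Finset.mem_sdiff, Finset.mem_Icc, Finset.mem_insert,
          Finset.mem_singleton] at this ⊢
        omega
    · intro x hx
      have := hsub hx
      simp only [Finset.mem_sdiff, Finset.mem_Icc, Finset.mem_insert,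
        Finset.mem_singleton] at this ⊢
      have hxne : x ≠ j - 2 := fun h => hc (h ▸ hx)
      omega
  · intro S hS
    have hsub := Finset.mem_powerset.1 hS
    rw [Finset.mem_powerset]
    simp only [swapCA]
    split_ifs with hc
    · intro x hx
      rcases Finset.mem_insert.1 hx with rfl | hx
      · simp only [Finset.mem_sdiff, Finset.mem_Icc, Finset.mem_insert,
          Finset.mem_singleton]
        omega
      · have hxe := Finset.mem_erase.1 hx
        have := hsub hxe.2
        simp only [Finset.mem_sdiff, Finset.mem_Icc, Finset.mem_insert,
          Finset.mem_singleton] at this ⊢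
        omega
    · intro x hx
      have := hsub hx
      simp only [Finset.mem_sdiff, Finset.mem_Icc, Finset.mem_insert,
        Finset.mem_singleton] at this ⊢
      have hxne : x ≠ j := fun h => hc (h ▸ hx)
      omega
  · intro S hS
    exact swapCA_swapCA j (j-2) S (hmem S hS) (by omega)
  · intro S hS
    exact swapCA_swapCA (j-2) j S (hmem' S hS) (by omega)
  · intro S hS
    beta_reduce
    rw [swapCA_card j (j-2) S (hmem S hS),
      swapCA_swapCA j (j-2) S (hmem S hS) (by omega)]

lemma split_powerset_sum (n j : ℕ) (hj3 : 3 ≤ j) (hjn : j ≤ n) (f : Finset ℕ → ℝ) :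
    ∑ S ∈ ((Finset.Icc 1 n) \ {j-2, j-1}).powerset, f S
      = ∑ T ∈ (Finset.Icc 1 (j-3)).powerset, ∑ U ∈ (Finset.Icc j n).powerset, f (T ∪ U) := by
  rw [← Finset.sum_product']
  refine Finset.sum_nbij' (fun S => (S.filter (· < j-2), S.filter (j-1 < ·)))
    (fun p => p.1 ∪ p.2) ?_ ?_ ?_ ?_ ?_
  · intro S hS
    have hsub := Finset.mem_powerset.1 hS
    rw [Finset.mem_product]
    constructor
    · rw [Finset.mem_powerset]
      intro x hx
      have hx1 := (Finset.mem_filter.1 hx).2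
      have := hsub (Finset.mem_filter.1 hx).1
      simp only [Finset.mem_sdiff, Finset.mem_Icc, Finset.mem_insert,
        Finset.mem_singleton] at this
      simp only [Finset.mem_Icc]
      omega
    · rw [Finset.mem_powerset]
      intro x hx
      have hx1 := (Finset.mem_filter.1 hx).2
      have := hsub (Finset.mem_filter.1 hx).1
      simp only [Finset.mem_sdiff, Finset.mem_Icc, Finset.mem_insert,
        Finset.mem_singleton] at this
      simp only [Finset.mem_Icc]
      omega
  · intro p hp
    rw [Finset.mem_product] at hp
    have h1 := Finset.mem_powerset.1 hp.1
    have h2 := Finset.mem_powerset.1 hp.2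
    rw [Finset.mem_powerset]
    intro x hx
    simp only [Finset.mem_sdiff, Finset.mem_Icc, Finset.mem_insert, Finset.mem_singleton]
    rcases Finset.mem_union.1 hx with hx | hx
    · have := h1 hx; simp only [Finset.mem_Icc] at this; omega
    · have := h2 hx; simp only [Finset.mem_Icc] at this; omega
  · intro S hS
    have hsub := Finset.mem_powerset.1 hS
    beta_reduce
    ext x
    simp only [Finset.mem_union, Finset.mem_filter]
    constructor
    · rintro (⟨h, _⟩ | ⟨h, _⟩) <;> exact h
    · intro hx
      have := hsub hx
      simp only [Finset.mem_sdiff, Finset.mem_Icc, Finset.mem_insert,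
        Finset.mem_singleton] at this
      by_cases hlt : x < j - 2
      · exact Or.inl ⟨hx, hlt⟩
      · exact Or.inr ⟨hx, by omega⟩
  · intro p hp
    rw [Finset.mem_product] at hp
    have h1 := Finset.mem_powerset.1 hp.1
    have h2 := Finset.mem_powerset.1 hp.2
    beta_reduce
    have e1 : (p.1 ∪ p.2).filter (· < j-2) = p.1 := by
      rw [Finset.filter_union,
        Finset.filter_true_of_mem (fun x hx => by
          have := h1 hx; simp only [Finset.mem_Icc] at this; omega),
        Finset.filter_false_of_mem (fun x hx => by
          have := h2 hx; simp only [Finset.mem_Icc] at this; omega),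
        Finset.union_empty]
    have e2 : (p.1 ∪ p.2).filter (j-1 < ·) = p.2 := by
      rw [Finset.filter_union,
        Finset.filter_false_of_mem (fun x hx => by
          have := h1 hx; simp only [Finset.mem_Icc] at this; omega),
        Finset.filter_true_of_mem (fun x hx => by
          have := h2 hx; simp only [Finset.mem_Icc] at this; omega),
        Finset.empty_union]
    rw [e1, e2]
  · intro S hS
    have hsub := Finset.mem_powerset.1 hS
    beta_reduce
    congr 1
    ext x
    simp only [Finset.mem_union, Finset.mem_filter]
    constructor
    · intro hx
      have := hsub hx
      simp only [Finset.mem_sdiff, Finset.mem_Icc, Finset.mem_insert,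
        Finset.mem_singleton] at this
      by_cases hlt : x < j - 2
      · exact Or.inl ⟨hx, hlt⟩
      · exact Or.inr ⟨hx, by omega⟩
    · rintro (⟨h, _⟩ | ⟨h, _⟩) <;> exact h

lemma count_sum (n k j : ℕ) (hj3 : 3 ≤ j) (hjn : j ≤ n) :
    ∑ S ∈ ((Finset.Icc 1 n) \ {j-2, j-1}).powerset,
      (1/((n-1).choose S.card):ℝ) * (if (S.filter (· < j-2)).card = k-1 then 1 else 0)
    = ((j-3).choose (k-1) : ℝ) *
        ∑ q ∈ Finset.range (n-j+2),
          (((n-j+1).choose q : ℝ) * (1 / ((n-1).choose (k-1+q)))) := by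
  rw [split_powerset_sum n j hj3 hjn]
  rw [Finset.sum_congr rfl (fun T hT => Finset.sum_congr rfl (fun U hU => by
    have hTs := Finset.mem_powerset.1 hT
    have hUs := Finset.mem_powerset.1 hU
    have hd : Disjoint T U := by
      rw [Finset.disjoint_left]
      intro x hxT hxU
      have h1 := hTs hxT; have h2 := hUs hxU
      simp only [Finset.mem_Icc] at h1 h2; omega
    have hfil : (T ∪ U).filter (· < j-2) = T := by
      rw [Finset.filter_union,
        Finset.filter_true_of_mem (fun x hx => by
          have := hTs hx; simp only [Finset.mem_Icc] at this; omega),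
        Finset.filter_false_of_mem (fun x hx => by
          have := hUs hx; simp only [Finset.mem_Icc] at this; omega),
        Finset.union_empty]
    show (1/((n-1).choose ((T ∪ U).card)):ℝ) * (if ((T∪U).filter (· < j-2)).card = k-1 then 1 else 0)
      = if T.card = k-1 then (1/((n-1).choose (T.card + U.card)):ℝ) else 0
    rw [hfil, Finset.card_union_of_disjoint hd, mul_comm, ite_mul, one_mul, zero_mul]))]
  rw [Finset.sum_congr rfl (fun T _ => show _ = if T.card = k-1
      then ∑ U ∈ (Finset.Icc j n).powerset, (1/((n-1).choose ((k-1) + U.card)):ℝ) else 0 by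
    by_cases hP : T.card = k-1
    · simp [hP]
    · simp [hP])]
  rw [← Finset.sum_filter, ← Finset.powersetCard_eq_filter, Finset.sum_const,
    Finset.card_powersetCard, Nat.card_Icc,
    Finset.sum_powerset_apply_card
      (f := fun q => (1:ℝ)/((n-1).choose (k-1+q))), Nat.card_Icc,
    show j - 3 + 1 - 1 = j - 3 from by omega, show n + 1 - j = n - j + 1 from by omega]

  simp only [nsmul_eq_mul, show n - j + 1 + 1 = n - j + 2 from rfl]

lemma inv_choose_add (M s : ℕ) (hs : s ≤ M) :
    (1:ℝ)/((M+1).choose s) + 1/((M+1).choose (s+1))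
      = (M+2)/((M+1) * (M.choose s)) := by
  have h1 : (M+1) * M.choose s = (M+1).choose (s+1) * (s+1) := Nat.add_one_mul_choose_eq M s
  have h2 : (M+1).choose (s+1) * (s+1) = (M+1).choose s * (M+1-s) :=
    Nat.choose_succ_right_eq (M+1) s
  have key : (M+2) * ((M+1).choose s * (M+1).choose (s+1))
      = ((M+1) * M.choose s) * ((M+1).choose s + (M+1).choose (s+1)) := by
    have hsplit : s + 1 + (M + 1 - s) = M + 2 := by omega
    calc (M+2) * ((M+1).choose s * (M+1).choose (s+1))
        = (s+1+(M+1-s)) * ((M+1).choose s * (M+1).choose (s+1)) := by rw [hsplit]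
      _ = ((M+1).choose (s+1) * (s+1)) * (M+1).choose s
          + ((M+1).choose s * (M+1-s)) * (M+1).choose (s+1) := by ring
      _ = ((M+1) * M.choose s) * (M+1).choose s
          + ((M+1) * M.choose s) * (M+1).choose (s+1) := by rw [← h2, ← h1]
      _ = ((M+1) * M.choose s) * ((M+1).choose s + (M+1).choose (s+1)) := by ring
  have n1 : ((M+1).choose s : ℝ) ≠ 0 :=
    Nat.cast_ne_zero.2 (Nat.choose_pos (by omega)).ne'
  have n2 : ((M+1).choose (s+1) : ℝ) ≠ 0 :=
    Nat.cast_ne_zero.2 (Nat.choose_pos (by omega)).ne'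
  have n3 : ((M.choose s : ℝ)) ≠ 0 := Nat.cast_ne_zero.2 (Nat.choose_pos hs).ne'
  have n4 : ((M:ℝ)+1) ≠ 0 := by positivity
  have keyR : ((M:ℝ)+2) * ((M+1).choose s * (M+1).choose (s+1))
      = (((M:ℝ)+1) * M.choose s) * ((M+1).choose s + (M+1).choose (s+1)) := by
    exact_mod_cast congrArg (Nat.cast : ℕ → ℝ) key
  field_simp
  nlinarith [keyR]

lemma choose_ident (A p : ℕ) (hp : p ≤ A) : ∀ B : ℕ,
    (A.choose p : ℝ) * ∑ q ∈ Finset.range (B+1),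
        ((B.choose q : ℝ) * (1 / ((A+B+1).choose (p+q))))
      = ((A:ℝ)+B+2) * ((A:ℝ) - p + 1) / (((A:ℝ)+1)*((A:ℝ)+2)) := by
  intro B
  induction B with
  | zero =>
    have h1 : (A+1) * A.choose p = (A+1).choose p * (A+1-p) := by
      rw [Nat.add_one_mul_choose_eq A p, Nat.choose_succ_right_eq (A+1) p]
    have hR : ((A:ℝ)+1) * A.choose p = ((A+1).choose p : ℝ) * ((A:ℝ)+1-(p:ℝ)) := by
      have h2 := congrArg (Nat.cast (R := ℝ)) h1
      push_cast [Nat.cast_sub (by omega : p ≤ A+1)] at h2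
      linarith [h2]
    have n1 : (((A+1).choose p : ℕ) : ℝ) ≠ 0 :=
      Nat.cast_ne_zero.2 (Nat.choose_pos (by omega)).ne'
    have n4 : ((A:ℝ)+1) ≠ 0 := by positivity
    have n5 : ((A:ℝ)+2) ≠ 0 := by positivity
    simp only [Finset.sum_range_one, Nat.choose_zero_right, Nat.cast_one, Nat.cast_zero,
      Nat.add_zero, add_zero, one_mul, Nat.zero_add]
    field_simp
    nlinarith [hR]
  | succ B ih =>
    have hstep : ∀ q ∈ Finset.range (B+1),
        ((B.choose q : ℝ)) * ((1:ℝ)/((A+B+2).choose (p+q)) + 1/((A+B+2).choose (p+q+1)))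
          = ((A:ℝ)+B+3)/((A:ℝ)+B+2) * ((B.choose q : ℝ) * (1/((A+B+1).choose (p+q)))) := by
      intro q hq
      have hq' : q ≤ B := by
        have := Finset.mem_range.1 hq; omega
      have hpq : p + q ≤ A + B + 1 := by omega
      have := inv_choose_add (A+B+1) (p+q) hpq
      rw [show A+B+1+1 = A+B+2 from rfl] at this
      rw [this]
      have hMn : ((A:ℝ)+B+2) ≠ 0 := by positivity
      have hCn : (((A+B+1).choose (p+q) : ℕ) : ℝ) ≠ 0 :=
        Nat.cast_ne_zero.2 (Nat.choose_pos (by omega)).ne'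
      push_cast
      field_simp
      ring
    have hsum : ∑ q ∈ Finset.range (B+2),
          (((B+1).choose q : ℝ)) * (1/((A+B+2).choose (p+q)))
        = ∑ q ∈ Finset.range (B+1),
          ((B.choose q : ℝ)) * ((1:ℝ)/((A+B+2).choose (p+q)) + 1/((A+B+2).choose (p+q+1))) := by
      rw [Finset.sum_range_succ'
        (fun q => (((B+1).choose q : ℝ)) * (1/((A+B+2).choose (p+q)))) (B+1)]
      rw [Finset.sum_congr rfl (fun i _ => show
          (((B+1).choose (i+1) : ℝ)) * (1/((A+B+2).choose (p+(i+1))))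
            = ((B.choose i : ℝ)) * (1/((A+B+2).choose (p+i+1)))
              + ((B.choose (i+1) : ℝ)) * (1/((A+B+2).choose (p+i+1))) from by
        rw [show p+(i+1) = p+i+1 from by omega, Nat.choose_succ_succ B i]
        push_cast; ring)]
      rw [Finset.sum_add_distrib]
      have e2 : ∑ q ∈ Finset.range (B+1),
            ((B.choose (q+1) : ℝ)) * (1/((A+B+2).choose (p+q+1)))
          = ∑ q ∈ Finset.range (B+1), ((B.choose q : ℝ)) * (1/((A+B+2).choose (p+q)))
            - 1/((A+B+2).choose p) := by
        have hss := Finset.sum_range_succ'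
          (fun q => ((B.choose q : ℝ)) * (1/((A+B+2).choose (p+q)))) B
        have hlast := Finset.sum_range_succ
          (fun q => ((B.choose (q+1) : ℝ)) * (1/((A+B+2).choose (p+q+1)))) B
        have hmatch : ∑ q ∈ Finset.range B,
              ((B.choose (q+1) : ℝ)) * (1/((A+B+2).choose (p+q+1)))
            = ∑ q ∈ Finset.range B,
              ((B.choose (q+1) : ℝ)) * (1/((A+B+2).choose (p+(q+1)))) :=
          Finset.sum_congr rfl (fun q _ => by rw [show p+(q+1) = p+q+1 from by omega])
        rw [hlast, hmatch, show (∑ q ∈ Finset.range B,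
              ((B.choose (q+1) : ℝ)) * (1/((A+B+2).choose (p+(q+1)))))
            = (∑ q ∈ Finset.range (B+1),
              ((B.choose q : ℝ)) * (1/((A+B+2).choose (p+q))))
              - ((B.choose 0 : ℝ)) * (1/((A+B+2).choose (p+0))) from by rw [hss]; ring]
        simp [Nat.choose_succ_self]
      rw [e2]
      simp only [mul_add]
      rw [Finset.sum_add_distrib]
      simp only [Nat.choose_zero_right, Nat.cast_one, one_mul, Nat.add_zero]
      ring
    simp only [show A+(B+1)+1 = A+B+2 from by omega, show B+1+1 = B+2 from by omega]
    rw [hsum, Finset.sum_congr rfl hstep, ← Finset.mul_sum, mul_left_comm, ih]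
    have n4 : ((A:ℝ)+1) ≠ 0 := by positivity
    have n5 : ((A:ℝ)+2) ≠ 0 := by positivity
    have n6 : ((A:ℝ)+B+2) ≠ 0 := by positivity
    push_cast
    field_simp
    ring

theorem sti_knn_recursion (n k j : ℕ) (m : ℕ → Bool)
    (hk : 1 ≤ k) (hkn : k ≤ n) (hj3 : 3 ≤ j) (hjn : j ≤ n) :
    (k + 1 < j →
      sti n (knnVal k m) (j - 2) (j - 1) =
        sti n (knnVal k m) (j - 1) j +
          (2 * ((j : ℝ) - k - 1) / (((j : ℝ) - 2) * ((j : ℝ) - 1))) *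
            ((if m j then (1 : ℝ) else 0) / k - (if m (j - 1) then (1 : ℝ) else 0) / k)) ∧
    (j ≤ k + 1 →
      sti n (knnVal k m) (j - 2) (j - 1) = sti n (knnVal k m) (j - 1) j) := by
  have key : sti n (knnVal k m) (j-2) (j-1) - sti n (knnVal k m) (j-1) j
      = (2/(n:ℝ)) * ((∑ S ∈ ((Finset.Icc 1 n) \ {j-2, j-1}).powerset,
          (1/((n-1).choose S.card):ℝ) * (if (S.filter (· < j-2)).card = k-1 then 1 else 0))
        * (((if m j then (1:ℝ) else 0) - (if m (j-1) then (1:ℝ) else 0))/k)) := by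
    unfold sti
    rw [sum_swap n j hj3 hjn
      (fun c S => (1/((n-1).choose c):ℝ) * secondDiff (knnVal k m) S (j-1) j)]
    rw [← mul_sub, ← Finset.sum_sub_distrib]
    rw [Finset.sum_congr rfl (fun S hS => show
        (1/((n-1).choose S.card):ℝ) * secondDiff (knnVal k m) S (j-2) (j-1)
          - (1/((n-1).choose S.card):ℝ) * secondDiff (knnVal k m) (swapCA (j-2) j S) (j-1) j
        = ((1/((n-1).choose S.card):ℝ) * (if (S.filter (· < j-2)).card = k-1 then 1 else 0))
            * (((if m j then (1:ℝ) else 0) - (if m (j-1) then (1:ℝ) else 0))/k) from by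
      rw [← mul_sub, point n k j m hk hj3 hjn S (Finset.mem_powerset.1 hS)]
      split_ifs <;> ring)]
    rw [← Finset.sum_mul]
  constructor
  · intro hkj
    have hsum := count_sum n k j hj3 hjn
    have hAB1 : (j-3) + (n-j+1) + 1 = n - 1 := by omega
    have hrange : (n-j+1) + 1 = n - j + 2 := by omega
    have hident := choose_ident (j-3) (k-1) (by omega : k-1 ≤ j-3) (n-j+1)
    rw [hAB1, hrange] at hident
    rw [hsum, hident] at key
    have hn0 : (n:ℝ) ≠ 0 := Nat.cast_ne_zero.2 (by omega)
    have hj2 : (j:ℝ) - 2 ≠ 0 :=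
      sub_ne_zero.2 (by exact_mod_cast (by omega : j ≠ 2))
    have hj1 : (j:ℝ) - 1 ≠ 0 :=
      sub_ne_zero.2 (by exact_mod_cast (by omega : j ≠ 1))
    have hfact : (2/(n:ℝ)) * ((((j-3:ℕ):ℝ) + ((n-j+1:ℕ):ℝ) + 2) * (((j-3:ℕ):ℝ) - ((k-1:ℕ):ℝ) + 1)
          / ((((j-3:ℕ):ℝ) + 1) * (((j-3:ℕ):ℝ) + 2)))
        = 2 * ((j:ℝ) - k - 1) / (((j:ℝ) - 2) * ((j:ℝ) - 1)) := by
      push_cast [Nat.cast_sub hj3, Nat.cast_sub hjn, Nat.cast_sub hk]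
      rw [show (j:ℝ) - 3 + ((n:ℝ) - (j:ℝ) + 1) + 2 = (n:ℝ) from by ring,
        show (j:ℝ) - 3 - ((k:ℝ) - 1) + 1 = (j:ℝ) - k - 1 from by ring,
        show (j:ℝ) - 3 + 1 = (j:ℝ) - 2 from by ring,
        show (j:ℝ) - 3 + 2 = (j:ℝ) - 1 from by ring]
      field_simp
    rw [← sub_eq_iff_eq_add', key, ← mul_assoc, hfact, sub_div]
  · intro hkj
    have hzero : ∑ S ∈ ((Finset.Icc 1 n) \ {j-2, j-1}).powerset,
        (1/((n-1).choose S.card):ℝ) * (if (S.filter (· < j-2)).card = k-1 then 1 else 0)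
        = 0 := by
      refine Finset.sum_eq_zero fun S hS => ?_
      have hsub := Finset.mem_powerset.1 hS
      have hcard : (S.filter (· < j-2)).card ≤ j - 3 := by
        have hsub2 : S.filter (· < j-2) ⊆ Finset.Icc 1 (j-3) := by
          intro x hx
          have h1 := (Finset.mem_filter.1 hx).2
          have h2 := hsub (Finset.mem_filter.1 hx).1
          simp only [Finset.mem_sdiff, Finset.mem_Icc, Finset.mem_insert,
            Finset.mem_singleton] at h2
          simp only [Finset.mem_Icc]
          omega
        have := Finset.card_le_card hsub2
        rwa [Nat.card_Icc, show j - 3 + 1 - 1 = j - 3 from by omega] at this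
      rw [if_neg (by omega), mul_zero]
    rw [hzero, zero_mul, mul_zero] at key
    linarith [key]
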